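/- Let the constraint value be C = 1/2 and restrict the bounded measurable game to strategies supported in [0, 1]. A strategy f with mca(f) ≤ 1/2 satisfies wp(f; g) ≥ 0 for every strategy g supported in [0, 1] with mca(g) ≤ 1/2 if and only if f is almost everywhere equal to a positive constant on [0, 1]. Consequently every equilibrium point of this game is comprised of strategies that are almost everywhere positive constants on [0, 1], and conversely any tuple of such strategies is an equilibrium point. -/

import Mathlib

open MeasureTheory Set

/-- Mean competitive ability of a function supported in `[0, ∞)`:
`mca f = (∫₀^∞ t f(t) dt) / (∫₀^∞ f(t) dt)`. -/
noncomputable def mca (f : ℝ → ℝ) : ℝ :=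
  (∫ t in Ioi (0:ℝ), t * f t) / (∫ t in Ioi (0:ℝ), f t)

/-- Payoff of `f` against `g`:
`wp f g = ∫₀^∞ f(x) (∫₀ˣ g(t) dt − ∫ₓ^∞ g(t) dt) dx`. -/
noncomputable def wp (f g : ℝ → ℝ) : ℝ :=
  ∫ x in Ioi (0:ℝ), f x * ((∫ t in Ioc (0:ℝ) x, g t) - ∫ t in Ioi x, g t)

/-- A bounded measurable strategy: measurable, bounded, nonnegative, compactly
supported in `[0, ∞)`, and not almost everywhere zero. -/
def IsStrategy (f : ℝ → ℝ) : Prop :=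
  Measurable f ∧ (∃ Cb : ℝ, ∀ x, f x ≤ Cb) ∧ (∀ x, 0 ≤ f x) ∧
  (∃ R : ℝ, Function.support f ⊆ Icc 0 R) ∧ ¬ f =ᵐ[volume] (0 : ℝ → ℝ)

lemma integrable_of_bdd_supp {h : ℝ → ℝ} {C R : ℝ} (hm : Measurable h)
    (hb : ∀ x, |h x| ≤ C) (hs : Function.support h ⊆ Icc 0 R) : Integrable h := by
  have h1 : h = (Icc (0:ℝ) R).indicator h := (indicator_eq_self.2 hs).symm
  rw [h1, integrable_indicator_iff measurableSet_Icc]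
  exact Measure.integrableOn_of_bounded measure_Icc_lt_top.ne
    hm.aestronglyMeasurable (ae_of_all _ hb)

lemma IsStrategy.integrable {f : ℝ → ℝ} (hf : IsStrategy f) : Integrable f := by
  obtain ⟨hm, ⟨Cb, hCb⟩, hnn, ⟨R, hR⟩, -⟩ := hf
  exact integrable_of_bdd_supp hm (fun x => by rw [abs_of_nonneg (hnn x)]; exact hCb x) hR

lemma IsStrategy.integrable_id_mul {f : ℝ → ℝ} (hf : IsStrategy f) :
    Integrable (fun t => t * f t) := by
  obtain ⟨hm, ⟨Cb, hCb⟩, hnn, ⟨R, hR⟩, -⟩ := hf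
  have hs : Function.support (fun t => t * f t) ⊆ Icc 0 R := fun x hx => by
    apply hR; intro h0; simp [Function.mem_support, h0] at hx
  refine integrable_of_bdd_supp (measurable_id.mul hm) (C := max R 0 * Cb) (fun x => ?_) hs
  by_cases hx : x ∈ Function.support fun t => t * f t
  · have hxm : x ∈ Icc 0 R := hs hx
    rw [abs_mul, abs_of_nonneg hxm.1, abs_of_nonneg (hnn x)]
    have h1 : x * f x ≤ max R 0 * f x :=
      mul_le_mul_of_nonneg_right (le_max_of_le_left hxm.2) (hnn x)
    exact h1.trans (mul_le_mul_of_nonneg_left (hCb x) (le_max_right _ _))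
  · have : x * f x = 0 := by
      by_contra hc
      exact hx hc
    rw [this, abs_zero]
    nlinarith [hCb 0, hnn 0, le_max_right R (0:ℝ)]

lemma IsStrategy.T_pos {f : ℝ → ℝ} (hf : IsStrategy f) : 0 < ∫ t in Ioi (0:ℝ), f t := by
  obtain ⟨hm, hb, hnn, ⟨R, hR⟩, hne⟩ := hf
  have hint : Integrable f := IsStrategy.integrable ⟨hm, hb, hnn, ⟨R, hR⟩, hne⟩
  rw [integral_pos_iff_support_of_nonneg (fun x => hnn x) hint.integrableOn]
  have hmsupp : MeasurableSet (Function.support f) :=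
    measurableSet_support hm
  rw [Measure.restrict_apply hmsupp]
  have hsub : Function.support f \ {0} ⊆ Function.support f ∩ Ioi 0 := by
    rintro x ⟨hx1, hx2⟩
    exact ⟨hx1, lt_of_le_of_ne (hR hx1).1 (by simpa [eq_comm] using hx2)⟩
  have hpos : 0 < volume (Function.support f) := by
    rcases eq_or_lt_of_le (zero_le : (0:ENNReal) ≤ volume (Function.support f)) with h | h
    · exfalso
      apply hne
      rw [Filter.eventuallyEq_iff_exists_mem]
      exact ⟨{x | f x = 0}, by rw [mem_ae_iff]; simpa [compl_setOf, Function.support] using h.symm,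
        fun x hx => hx⟩
    · exact h
  calc 0 < volume (Function.support f \ {0}) := by
        rw [measure_diff_null (measure_singleton 0)]; exact hpos
    _ ≤ volume (Function.support f ∩ Ioi 0) := measure_mono hsub

variable {f : ℝ → ℝ}

noncomputable def Pr (f : ℝ → ℝ) (t : ℝ) : ℝ := ∫ s in Ioc (0:ℝ) t, f s

lemma Pr_eq_primitive (hsupp : Function.support f ⊆ Icc 0 1) :
    Pr f = fun t => ∫ s in (0:ℝ)..t, f s := by
  funext t
  rcases le_or_gt 0 t with h | h
  · rw [intervalIntegral.integral_of_le h]; rfl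
  · rw [intervalIntegral.integral_symm, intervalIntegral.integral_of_le h.le]
    have h1 : ∫ s in Ioc t 0, f s = 0 := by
      rw [integral_Ioc_eq_integral_Ioo]
      refine setIntegral_eq_zero_of_forall_eq_zero fun x hx => ?_
      by_contra hc
      exact absurd (hsupp hc).1 (not_le.2 hx.2)
    have h2 : Pr f t = 0 := by
      unfold Pr
      rw [Ioc_eq_empty (by linarith : ¬ (0:ℝ) < t)]
      simp
    rw [h1, h2, neg_zero]

lemma Pr_continuous (hint : Integrable f) (hsupp : Function.support f ⊆ Icc 0 1) :
    Continuous (Pr f) := by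
  rw [Pr_eq_primitive hsupp]
  exact intervalIntegral.continuous_primitive (fun a b => hint.intervalIntegrable) 0

lemma Pr_mono (hint : Integrable f) (hnn : ∀ x, 0 ≤ f x) : Monotone (Pr f) := by
  intro s u hsu
  exact setIntegral_mono_set hint.integrableOn (ae_of_all _ hnn)
    (HasSubset.Subset.eventuallyLE (Ioc_subset_Ioc_right hsu))

lemma integral_Ioi_split (hint : Integrable f) {t : ℝ} (ht : 0 ≤ t) :
    ∫ s in Ioi (0:ℝ), f s = Pr f t + ∫ s in Ioi t, f s := by
  rw [← Ioc_union_Ioi_eq_Ioi ht, setIntegral_union (Ioc_disjoint_Ioi le_rfl)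
    measurableSet_Ioi hint.integrableOn hint.integrableOn]
  rfl

lemma integral_Ioi_one_eq_zero (hsupp : Function.support f ⊆ Icc 0 1) :
    ∫ s in Ioi (1:ℝ), f s = 0 :=
  setIntegral_eq_zero_of_forall_eq_zero fun x hx => by
    by_contra hc; exact absurd (hsupp hc).2 (not_le.2 hx)

lemma integral_Ioi_eq_Ioc01 (hint : Integrable f) (hsupp : Function.support f ⊆ Icc 0 1) :
    ∫ s in Ioi (0:ℝ), f s = ∫ s in Ioc (0:ℝ) 1, f s := by
  rw [integral_Ioi_split hint zero_le_one, integral_Ioi_one_eq_zero hsupp, add_zero]; rfl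

lemma Pr_one (hint : Integrable f) (hsupp : Function.support f ⊆ Icc 0 1) :
    Pr f 1 = ∫ s in Ioi (0:ℝ), f s := (integral_Ioi_eq_Ioc01 hint hsupp).symm

lemma Pr_ge_one (hint : Integrable f) (hsupp : Function.support f ⊆ Icc 0 1) {t : ℝ}
    (ht : 1 ≤ t) : Pr f t = ∫ s in Ioi (0:ℝ), f s := by
  have h1 : Pr f t = Pr f 1 + ∫ s in Ioc (1:ℝ) t, f s := by
    unfold Pr
    rw [← Ioc_union_Ioc_eq_Ioc zero_le_one ht,
      setIntegral_union (Ioc_disjoint_Ioc_of_le le_rfl) measurableSet_Ioc hint.integrableOn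
        hint.integrableOn]
  have h2 : ∫ s in Ioc (1:ℝ) t, f s = 0 :=
    setIntegral_eq_zero_of_forall_eq_zero fun x hx => by
      by_contra hc; exact absurd (hsupp hc).2 (not_le.2 hx.1)
  rw [h1, h2, add_zero, Pr_one hint hsupp]

lemma Pr_nonpos {t : ℝ} (ht : t ≤ 0) : Pr f t = 0 := by
  unfold Pr; rw [Ioc_eq_empty (by simpa using ht)]; simp

variable {f g h : ℝ → ℝ}


lemma wp_eq' (hh : Integrable h) :
    wp g h = ∫ x in Ioi (0:ℝ), g x * (2 * Pr h x - ∫ t in Ioi (0:ℝ), h t) := by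
  unfold wp
  refine setIntegral_congr_fun measurableSet_Ioi (fun x hx => ?_)
  have hs := integral_Ioi_split hh (le_of_lt hx)
  have : (∫ t in Ioi x, h t) = (∫ t in Ioi (0:ℝ), h t) - Pr h x := by linarith
  rw [this]
  unfold Pr
  ring

lemma wp_swap (hfm : Measurable f) (hfi : Integrable f) (hgm : Measurable g)
    (hgi : Integrable g) :
    wp f g = ∫ t in Ioi (0:ℝ), g t * ((∫ s in Ioi (0:ℝ), f s) - 2 * Pr f t) := by
  set μ := volume.restrict (Ioi (0:ℝ)) with hμ
  set K : ℝ → ℝ → ℝ := fun x t => f x * g t * (if t ≤ x then 1 else -1) with hK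
  have hKm : Measurable (Function.uncurry K) := by
    apply ((hfm.comp measurable_fst).mul (hgm.comp measurable_snd)).mul
    exact Measurable.ite (measurableSet_le measurable_snd measurable_fst)
      measurable_const measurable_const
  have habs : ∀ x t : ℝ, |K x t| ≤ |f x| * |g t| := by
    intro x t
    rw [hK]
    simp only []
    rw [abs_mul, abs_mul]
    have h1 : |(if t ≤ x then (1:ℝ) else -1)| = 1 := by split <;> simp
    rw [h1, mul_one]
  have hKint : Integrable (Function.uncurry K) (μ.prod μ) := by
    have hD : Integrable (fun z : ℝ × ℝ => |f z.1| * |g z.2|) (μ.prod μ) :=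
      (hfi.integrableOn.abs).mul_prod (hgi.integrableOn.abs)
    refine hD.mono' hKm.aestronglyMeasurable (ae_of_all _ fun z => ?_)
    rw [Real.norm_eq_abs]
    exact habs z.1 z.2
  have hslice : ∀ x : ℝ, Integrable (fun t => K x t) := by
    intro x
    have hm : Measurable (fun t => K x t) :=
      ((measurable_const.mul hgm).mul
        (Measurable.ite measurableSet_Iic measurable_const measurable_const))
    refine (hgi.abs.const_mul |f x|).mono' hm.aestronglyMeasurable (ae_of_all _ fun t => ?_)
    rw [Real.norm_eq_abs]
    exact habs x t
  have hslice2 : ∀ t : ℝ, Integrable (fun x => K x t) := by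
    intro t
    have hm : Measurable (fun x => K x t) :=
      ((hfm.mul measurable_const).mul
        (Measurable.ite measurableSet_Ici measurable_const measurable_const))
    refine (hfi.abs.mul_const |g t|).mono' hm.aestronglyMeasurable (ae_of_all _ fun x => ?_)
    rw [Real.norm_eq_abs]
    exact habs x t
  have h1 : wp f g = ∫ x, (∫ t, K x t ∂μ) ∂μ := by
    unfold wp
    refine setIntegral_congr_fun measurableSet_Ioi (fun x hx => ?_)
    have hsplit : ∫ t, K x t ∂μ = (∫ t in Ioc (0:ℝ) x, K x t) + ∫ t in Ioi x, K x t := by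
      rw [hμ, ← Ioc_union_Ioi_eq_Ioi (le_of_lt hx), setIntegral_union (Ioc_disjoint_Ioi le_rfl)
        measurableSet_Ioi (hslice x).integrableOn (hslice x).integrableOn]
    have e1 : ∫ t in Ioc (0:ℝ) x, K x t = f x * ∫ t in Ioc (0:ℝ) x, g t := by
      rw [← integral_const_mul]
      refine setIntegral_congr_fun measurableSet_Ioc (fun t ht => ?_)
      rw [hK]; simp only [if_pos ht.2]; ring
    have e2 : ∫ t in Ioi x, K x t = -(f x * ∫ t in Ioi x, g t) := by
      have : ∫ t in Ioi x, K x t = ∫ t in Ioi x, -(f x * g t) := by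
        refine setIntegral_congr_fun measurableSet_Ioi (fun t ht => ?_)
        rw [hK]; simp only [if_neg (not_le.2 (mem_Ioi.1 ht))]; ring
      rw [this, integral_neg, integral_const_mul]
    rw [hsplit, e1, e2]
    ring
  rw [h1, integral_integral_swap hKint]
  refine setIntegral_congr_fun measurableSet_Ioi (fun t ht => ?_)
  have hsplit : ∫ x, K x t ∂μ = (∫ x in Ioo (0:ℝ) t, K x t) + ∫ x in Ici t, K x t := by
    rw [hμ, ← Ioo_union_Ici_eq_Ioi ht, setIntegral_union
      (Iio_disjoint_Ici le_rfl |>.mono_left Ioo_subset_Iio_self) measurableSet_Ici (hslice2 t).integrableOn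
      (hslice2 t).integrableOn]
  have e1 : ∫ x in Ioo (0:ℝ) t, K x t = -((∫ x in Ioo (0:ℝ) t, f x) * g t) := by
    have : ∫ x in Ioo (0:ℝ) t, K x t = ∫ x in Ioo (0:ℝ) t, -(f x * g t) := by
      refine setIntegral_congr_fun measurableSet_Ioo (fun x hx => ?_)
      rw [hK]; simp only [if_neg (not_le.2 hx.2)]; ring
    rw [this, integral_neg, integral_mul_const]
  have e2 : ∫ x in Ici t, K x t = (∫ x in Ici t, f x) * g t := by
    rw [← integral_mul_const]
    refine setIntegral_congr_fun measurableSet_Ici (fun x hx => ?_)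
    rw [hK]; simp only [if_pos (mem_Ici.1 hx)]; ring
  have e3 : (∫ x in Ioo (0:ℝ) t, f x) = Pr f t := (integral_Ioc_eq_integral_Ioo).symm
  have e4 : (∫ x in Ici t, f x) = (∫ s in Ioi (0:ℝ), f s) - Pr f t := by
    rw [integral_Ici_eq_integral_Ioi]
    have := integral_Ioi_split hfi (le_of_lt ht)
    linarith
  rw [hsplit, e1, e2, e3, e4]
  ring

lemma wp_antisymm (hfm : Measurable f) (hfi : Integrable f) (hgm : Measurable g)
    (hgi : Integrable g) : wp f g = -wp g f := by
  rw [wp_swap hfm hfi hgm hgi, wp_eq' hfi, ← integral_neg]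
  refine setIntegral_congr_fun measurableSet_Ioi (fun t ht => ?_)
  ring



noncomputable def bump (p q c : ℝ) : ℝ → ℝ := (Ioc p q).indicator fun _ => c

lemma bump_meas (p q c : ℝ) : Measurable (bump p q c) :=
  measurable_const.indicator measurableSet_Ioc

lemma bump_nonneg {p q c : ℝ} (hc : 0 ≤ c) : ∀ x, 0 ≤ bump p q c x := fun x =>
  indicator_nonneg (fun _ _ => hc) x

lemma bump_le {p q c : ℝ} (hc : 0 ≤ c) : ∀ x, bump p q c x ≤ c := fun x => by
  unfold bump; by_cases h : x ∈ Ioc p q <;> simp [h, hc]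

lemma bump_supp (p q c : ℝ) : Function.support (bump p q c) ⊆ Ioc p q :=
  Set.support_indicator_subset

lemma bump_integrable (p q c : ℝ) : Integrable (bump p q c) := by
  unfold bump
  rw [integrable_indicator_iff measurableSet_Ioc]
  exact integrableOn_const measure_Ioc_lt_top.ne

lemma bump_mul {p q c : ℝ} (hp : 0 ≤ p) (φ : ℝ → ℝ) :
    ∫ t in Ioi (0:ℝ), bump p q c t * φ t = c * ∫ t in Ioc p q, φ t := by
  have h1 : ∀ t, bump p q c t * φ t = (Ioc p q).indicator (fun t => c * φ t) t := by
    intro t; unfold bump; by_cases h : t ∈ Ioc p q <;> simp [h]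
  rw [show (fun t => bump p q c t * φ t) = fun t => (Ioc p q).indicator (fun t => c * φ t) t from
    funext h1]
  rw [integral_indicator measurableSet_Ioc, Measure.restrict_restrict measurableSet_Ioc]
  have h2 : Ioc p q ∩ Ioi 0 = Ioc p q :=
    inter_eq_left.2 (fun x hx => lt_of_le_of_lt hp hx.1)
  rw [h2, integral_const_mul]

lemma bump_total {p q c : ℝ} (hp : 0 ≤ p) (hpq : p ≤ q) :
    ∫ t in Ioi (0:ℝ), bump p q c t = c * (q - p) := by
  have := bump_mul (q := q) (c := c) hp (fun _ => (1:ℝ))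
  simp only [mul_one] at this
  rw [this, setIntegral_const, Real.volume_real_Ioc_of_le hpq, smul_eq_mul, mul_one]

lemma bump_moment {p q c : ℝ} (hp : 0 ≤ p) (hpq : p ≤ q) :
    ∫ t in Ioi (0:ℝ), t * bump p q c t = c * ((q^2 - p^2)/2) := by
  have h1 : ∀ t, t * bump p q c t = bump p q c t * t := fun t => mul_comm _ _
  rw [show (fun t => t * bump p q c t) = fun t => bump p q c t * t from funext h1,
    bump_mul hp (fun t => t)]
  congr 1
  rw [← intervalIntegral.integral_of_le hpq]
  simp



lemma avg_bound {φ : ℝ → ℝ} (hφ : Continuous φ) (hanti : Antitone φ) {s u : ℝ} (hsu : s ≤ u) :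
    ∫ t in Ioc s u, φ t ≤ (u - s) * φ s := by
  have h1 : ∫ t in Ioc s u, φ t ≤ ∫ _t in Ioc s u, φ s :=
    setIntegral_mono_on hφ.integrableOn_Ioc (integrableOn_const measure_Ioc_lt_top.ne)
      measurableSet_Ioc (fun x hx => hanti hx.1.le)
  have h2 : ∫ _t in Ioc s u, φ s = (u - s) * φ s := by
    rw [setIntegral_const, Real.volume_real_Ioc_of_le hsu, smul_eq_mul]
  linarith

lemma bump_id_integrable {p q c : ℝ} (hp : 0 ≤ p) (hq : 0 ≤ q) (hc : 0 ≤ c) :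
    Integrable (fun t => t * bump p q c t) := by
  refine integrable_of_bdd_supp (C := q * c) (R := q)
    (measurable_id.mul (bump_meas p q c)) (fun x => ?_) ?_
  · by_cases hx : x ∈ Ioc p q
    · unfold bump; rw [indicator_of_mem hx]
      rw [abs_mul, abs_of_nonneg (le_trans hp hx.1.le : (0:ℝ) ≤ x), abs_of_nonneg hc]
      exact mul_le_mul_of_nonneg_right hx.2 hc
    · unfold bump; rw [indicator_of_notMem hx, mul_zero, abs_zero]; positivity
  · intro x hx
    have h0 : bump p q c x ≠ 0 := by
      intro h0
      simp [Function.mem_support, h0] at hx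
    have hmem := bump_supp p q c h0
    exact ⟨le_trans hp hmem.1.le, hmem.2⟩

lemma bump_phi_integrable {p q c : ℝ} {φ : ℝ → ℝ} (hφ : Continuous φ) :
    Integrable (fun t => bump p q c t * φ t) := by
  have h1 : (fun t => bump p q c t * φ t) = (Ioc p q).indicator (fun t => c * φ t) := by
    funext t; unfold bump; by_cases h : t ∈ Ioc p q <;> simp [h]
  rw [h1, integrable_indicator_iff measurableSet_Ioc]
  exact (continuous_const.mul hφ).integrableOn_Ioc

lemma two_bump (hf : IsStrategy f) (hsupp : Function.support f ⊆ Icc 0 1)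
    (H : ∀ g, IsStrategy g → Function.support g ⊆ Icc 0 1 → mca g ≤ 1/2 →
      0 ≤ ∫ t in Ioi (0:ℝ), g t * ((∫ s in Ioi (0:ℝ), f s) - 2 * Pr f t))
    {p₁ q₁ p₂ q₂ c₁ c₂ : ℝ}
    (hp₁ : 0 ≤ p₁) (hpq₁ : p₁ < q₁) (hq₁ : q₁ ≤ 1)
    (hp₂ : 0 ≤ p₂) (hpq₂ : p₂ ≤ q₂) (hq₂ : q₂ ≤ 1)
    (hc₁ : 0 < c₁) (hc₂ : 0 ≤ c₂)
    (hmca : c₁*(q₁^2 - p₁^2)/2 + c₂*(q₂^2-p₂^2)/2 ≤ (c₁*(q₁-p₁) + c₂*(q₂-p₂))/2) :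
    0 ≤ c₁ * (∫ t in Ioc p₁ q₁, ((∫ s in Ioi (0:ℝ), f s) - 2 * Pr f t))
      + c₂ * ∫ t in Ioc p₂ q₂, ((∫ s in Ioi (0:ℝ), f s) - 2 * Pr f t) := by
  have hφc : Continuous (fun t => (∫ s in Ioi (0:ℝ), f s) - 2 * Pr f t) :=
    continuous_const.sub (continuous_const.mul (Pr_continuous hf.integrable hsupp))
  set T := ∫ s in Ioi (0:ℝ), f s with hT
  set φ : ℝ → ℝ := fun t => T - 2 * Pr f t with hφdef
  set g : ℝ → ℝ := fun t => bump p₁ q₁ c₁ t + bump p₂ q₂ c₂ t with hgdef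
  have hq₁0 : (0:ℝ) ≤ q₁ := le_trans hp₁ hpq₁.le
  have hq₂0 : (0:ℝ) ≤ q₂ := le_trans hp₂ hpq₂
  have hTg : ∫ t in Ioi (0:ℝ), g t = c₁*(q₁-p₁) + c₂*(q₂-p₂) := by
    rw [hgdef, integral_add (bump_integrable _ _ _).integrableOn
      (bump_integrable _ _ _).integrableOn, bump_total hp₁ hpq₁.le, bump_total hp₂ hpq₂]
  have hTgpos : 0 < ∫ t in Ioi (0:ℝ), g t := by
    rw [hTg]
    nlinarith
  have hIg : ∫ t in Ioi (0:ℝ), t * g t = c₁*((q₁^2-p₁^2)/2) + c₂*((q₂^2-p₂^2)/2) := by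
    have h1 : (fun t => t * g t)
        = fun t => t * bump p₁ q₁ c₁ t + t * bump p₂ q₂ c₂ t := by
      funext t; rw [hgdef]; ring
    rw [h1, integral_add (bump_id_integrable hp₁ hq₁0 hc₁.le).integrableOn
      (bump_id_integrable hp₂ hq₂0 hc₂).integrableOn,
      bump_moment hp₁ hpq₁.le, bump_moment hp₂ hpq₂]
  have hsuppg : Function.support g ⊆ Icc 0 1 := by
    intro x hx
    have : bump p₁ q₁ c₁ x ≠ 0 ∨ bump p₂ q₂ c₂ x ≠ 0 := by
      by_contra hcon
      push_neg at hcon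
      have : g x = 0 := by rw [hgdef]; simp [hcon.1, hcon.2]
      exact hx this
    rcases this with h | h
    · have := bump_supp _ _ _ h; exact ⟨le_trans hp₁ this.1.le, this.2.trans hq₁⟩
    · have := bump_supp _ _ _ h; exact ⟨le_trans hp₂ this.1.le, this.2.trans hq₂⟩
  have hstrat : IsStrategy g := by
    refine ⟨(bump_meas _ _ _).add (bump_meas _ _ _), ⟨c₁ + c₂, fun x => ?_⟩,
      fun x => add_nonneg (bump_nonneg hc₁.le x) (bump_nonneg hc₂ x), ⟨1, hsuppg⟩, ?_⟩
    · exact add_le_add (bump_le hc₁.le x) (bump_le hc₂ x)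
    · intro hae
      have h0 : ∫ t in Ioi (0:ℝ), g t = 0 := by
        have hres : g =ᵐ[volume.restrict (Ioi 0)] 0 :=
          hae.filter_mono (ae_mono Measure.restrict_le_self)
        rw [integral_congr_ae hres]; simp
      rw [h0] at hTgpos
      exact lt_irrefl _ hTgpos
  have hmcag : mca g ≤ 1/2 := by
    unfold mca
    rw [div_le_iff₀ hTgpos, hIg, hTg]
    nlinarith
  have happ := H g hstrat hsuppg hmcag
  have heval : ∫ t in Ioi (0:ℝ), g t * φ t
      = c₁ * (∫ t in Ioc p₁ q₁, φ t) + c₂ * ∫ t in Ioc p₂ q₂, φ t := by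
    have h1 : (fun t => g t * φ t)
        = fun t => bump p₁ q₁ c₁ t * φ t + bump p₂ q₂ c₂ t * φ t := by
      funext t; rw [hgdef]; ring
    rw [h1, integral_add (bump_phi_integrable hφc).integrableOn
      (bump_phi_integrable hφc).integrableOn, bump_mul hp₁ φ, bump_mul hp₂ φ]
  rw [heval] at happ
  exact happ
lemma phi_lower (hf : IsStrategy f) (hsupp : Function.support f ⊆ Icc 0 1)
    (H : ∀ g, IsStrategy g → Function.support g ⊆ Icc 0 1 → mca g ≤ 1/2 →
      0 ≤ ∫ t in Ioi (0:ℝ), g t * ((∫ s in Ioi (0:ℝ), f s) - 2 * Pr f t))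
    {a : ℝ} (ha : a ∈ Ioc (0:ℝ) 1) :
    (1 - 2*a) * (∫ s in Ioi (0:ℝ), f s) ≤ (∫ s in Ioi (0:ℝ), f s) - 2 * Pr f a := by
  set T := ∫ s in Ioi (0:ℝ), f s with hT
  set φ : ℝ → ℝ := fun t => T - 2 * Pr f t with hφdef
  have hφc : Continuous φ :=
    continuous_const.sub (continuous_const.mul (Pr_continuous hf.integrable hsupp))
  have hφanti : Antitone φ := by
    intro s u hsu
    have := Pr_mono hf.integrable hf.2.2.1 hsu
    simp only [hφdef]
    linarith
  have hφ1 : φ 1 = -T := by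
    simp only [hφdef]
    rw [Pr_one hf.integrable hsupp, ← hT]; ring
  have hφ0 : φ 0 = T := by simp only [hφdef]; rw [Pr_nonpos le_rfl]; ring
  rcases le_or_gt a (1/2) with hcase | hcase
  · set γ := 1 - 2*a with hγ
    have hγ0 : 0 ≤ γ := by rw [hγ]; linarith
    have key : ∀ ε ∈ Ioo (0:ℝ) a, 0 ≤ φ (a - ε) + γ * φ (1 - ε) := by
      rintro ε ⟨hε0, hεa⟩
      have h2b := two_bump hf hsupp H (p₁ := a - ε) (q₁ := a) (p₂ := 1 - ε) (q₂ := 1)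
        (c₁ := 1) (c₂ := γ) (by linarith) (by linarith) ha.2 (by linarith) (by linarith)
        le_rfl one_pos hγ0 (by rw [hγ]; nlinarith [mul_nonneg (sub_nonneg.2 ha.2) (sq_nonneg ε)])
      have b1 : ∫ t in Ioc (a - ε) a, φ t ≤ (a - (a - ε)) * φ (a - ε) :=
        avg_bound hφc hφanti (by linarith)
      have b2 : ∫ t in Ioc (1 - ε) 1, φ t ≤ ((1:ℝ) - (1 - ε)) * φ (1 - ε) :=
        avg_bound hφc hφanti (by linarith)
      have hX : 0 ≤ ε * (φ (a - ε) + γ * φ (1 - ε)) := by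
        nlinarith [mul_le_mul_of_nonneg_left b2 hγ0]
      exact (mul_nonneg_iff_of_pos_left hε0).mp hX
    have hcψ : Continuous (fun ε : ℝ => φ (a - ε) + γ * φ (1 - ε)) :=
      (hφc.comp (continuous_const.sub continuous_id)).add
        (continuous_const.mul (hφc.comp (continuous_const.sub continuous_id)))
    have htends : Filter.Tendsto (fun ε : ℝ => φ (a - ε) + γ * φ (1 - ε))
        (nhdsWithin 0 (Ioi 0)) (nhds (φ (a - 0) + γ * φ (1 - 0))) :=
      (hcψ.tendsto 0).mono_left nhdsWithin_le_nhds
    have hlim : 0 ≤ φ (a - 0) + γ * φ (1 - 0) :=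
      ge_of_tendsto htends (Filter.eventually_of_mem
        (Ioo_mem_nhdsGT_of_mem ⟨le_rfl, ha.1⟩) key)
    rw [sub_zero, sub_zero, hφ1] at hlim
    simp only [hφdef] at hlim ⊢
    rw [hγ] at hlim ⊢
    ring_nf at hlim ⊢
    linarith
  · set α := 2*a - 1 with hα
    have hα0 : 0 < α := by rw [hα]; linarith
    have key : ∀ ε ∈ Ioo (0:ℝ) (a/2), 0 ≤ α * T + φ (a - ε) := by
      rintro ε ⟨hε0, hεa⟩
      have h2b := two_bump hf hsupp H (p₁ := 0) (q₁ := ε) (p₂ := a - ε) (q₂ := a)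
        (c₁ := α) (c₂ := 1) le_rfl hε0 (by linarith [ha.2]) (by linarith) (by linarith) ha.2
        hα0 zero_le_one (by rw [hα]; nlinarith [ha.2])
      have b1 : ∫ t in Ioc (0:ℝ) ε, φ t ≤ (ε - 0) * φ 0 := avg_bound hφc hφanti (by linarith)
      have b2 : ∫ t in Ioc (a - ε) a, φ t ≤ (a - (a - ε)) * φ (a - ε) :=
        avg_bound hφc hφanti (by linarith)
      have hX : 0 ≤ ε * (α * T + φ (a - ε)) := by
        rw [hφ0] at b1
        nlinarith [mul_le_mul_of_nonneg_left b1 hα0.le]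
      exact (mul_nonneg_iff_of_pos_left hε0).mp hX
    have hcψ : Continuous (fun ε : ℝ => α * T + φ (a - ε)) :=
      continuous_const.add (hφc.comp (continuous_const.sub continuous_id))
    have htends : Filter.Tendsto (fun ε : ℝ => α * T + φ (a - ε))
        (nhdsWithin 0 (Ioi 0)) (nhds (α * T + φ (a - 0))) :=
      (hcψ.tendsto 0).mono_left nhdsWithin_le_nhds
    have hlim : 0 ≤ α * T + φ (a - 0) :=
      ge_of_tendsto htends (Filter.eventually_of_mem
        (Ioo_mem_nhdsGT_of_mem ⟨le_rfl, by linarith [ha.1]⟩) key)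
    rw [sub_zero] at hlim
    simp only [hφdef] at hlim ⊢
    rw [show α * T = (2*a-1)*T from by rw [hα]] at hlim
    nlinarith [hlim]

lemma Pr_le_linear (hf : IsStrategy f) (hsupp : Function.support f ⊆ Icc 0 1)
    (H : ∀ g, IsStrategy g → Function.support g ⊆ Icc 0 1 → mca g ≤ 1/2 →
      0 ≤ ∫ t in Ioi (0:ℝ), g t * ((∫ s in Ioi (0:ℝ), f s) - 2 * Pr f t))
    {a : ℝ} (ha : a ∈ Icc (0:ℝ) 1) :
    Pr f a ≤ a * (∫ s in Ioi (0:ℝ), f s) := by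
  rcases eq_or_lt_of_le ha.1 with h0 | h0
  · rw [Pr_nonpos (le_of_eq h0.symm), ← h0, zero_mul]
  · have := phi_lower hf hsupp H (a := a) ⟨h0, ha.2⟩
    linarith
lemma Pr_nonneg (hnn : ∀ x, 0 ≤ f x) (x : ℝ) : 0 ≤ Pr f x :=
  setIntegral_nonneg measurableSet_Ioc (fun t _ => hnn t)

lemma Pr_u_eval {x : ℝ} (hx : x ∈ Ioc (0:ℝ) 1) : Pr (bump 0 1 1) x = x := by
  unfold Pr bump
  rw [integral_indicator measurableSet_Ioc, Measure.restrict_restrict measurableSet_Ioc,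
    Ioc_inter_Ioc]
  rw [max_self, min_eq_right hx.2, setIntegral_const, Real.volume_real_Ioc_of_le hx.1.le, smul_eq_mul, mul_one, sub_zero]

lemma u_supp : Function.support (bump 0 1 1) ⊆ Icc (0:ℝ) 1 := fun x hx => by
  have := bump_supp 0 1 1 hx; exact ⟨this.1.le, this.2⟩

lemma u_total : ∫ t in Ioi (0:ℝ), bump 0 1 1 t = 1 := by
  rw [bump_total le_rfl zero_le_one]; ring

lemma Pr_u_mem (x : ℝ) : 0 ≤ Pr (bump 0 1 1) x ∧ Pr (bump 0 1 1) x ≤ 1 := by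
  refine ⟨Pr_nonneg (bump_nonneg zero_le_one) x, ?_⟩
  rcases le_or_gt x 1 with h | h
  · have := Pr_mono (bump_integrable 0 1 1) (bump_nonneg zero_le_one) h
    rwa [Pr_one (bump_integrable 0 1 1) u_supp, u_total] at this
  · rw [Pr_ge_one (bump_integrable 0 1 1) u_supp h.le, u_total]

lemma Pr_integral_identity (hf : IsStrategy f) (hsupp : Function.support f ⊆ Icc 0 1) :
    ∫ a in Ioc (0:ℝ) 1, Pr f a
      = (∫ s in Ioi (0:ℝ), f s) - ∫ t in Ioi (0:ℝ), t * f t := by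
  obtain ⟨Cb, hCb⟩ := hf.2.1
  set T := ∫ s in Ioi (0:ℝ), f s with hT
  have hA : wp f (bump 0 1 1) = T - 2 * ∫ a in Ioc (0:ℝ) 1, Pr f a := by
    rw [wp_swap hf.1 hf.integrable (bump_meas 0 1 1) (bump_integrable 0 1 1),
      bump_mul le_rfl (fun t => T - 2 * Pr f t), one_mul,
      integral_sub (f := fun _ => T) (g := fun t => 2 * Pr f t) (integrableOn_const (C := T) measure_Ioc_lt_top.ne)
        ((continuous_const.mul (Pr_continuous hf.integrable hsupp) :
          Continuous fun t => 2 * Pr f t).integrableOn_Ioc),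
      setIntegral_const, Real.volume_real_Ioc_of_le zero_le_one, integral_const_mul]
    norm_num
  have hψ : ∀ x, |2 * Pr (bump 0 1 1) x - 1| ≤ 1 := by
    intro x
    have := Pr_u_mem x
    rw [abs_le]; constructor <;> linarith [this.1, this.2]
  have hint2 : Integrable (fun x => f x * (2 * Pr (bump 0 1 1) x - 1)) := by
    refine integrable_of_bdd_supp (C := Cb) (R := 1)
      (hf.1.mul (((continuous_const.mul
        (Pr_continuous (bump_integrable 0 1 1) u_supp)).sub continuous_const).measurable))
      (fun x => ?_) (fun x hx => ?_)
    · rw [abs_mul]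
      calc |f x| * |2 * Pr (bump 0 1 1) x - 1| ≤ |f x| * 1 :=
            mul_le_mul_of_nonneg_left (hψ x) (abs_nonneg _)
        _ = f x := by rw [mul_one, abs_of_nonneg (hf.2.2.1 x)]
        _ ≤ Cb := hCb x
    · apply hsupp
      intro h0
      simp [Function.mem_support, h0] at hx
  have hsupp2 : Function.support (fun x => f x * (2 * Pr (bump 0 1 1) x - 1)) ⊆ Icc 0 1 := by
    intro x hx
    apply hsupp
    intro h0
    simp [Function.mem_support, h0] at hx
  have hB : wp f (bump 0 1 1) = 2 * (∫ t in Ioi (0:ℝ), t * f t) - T := by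
    rw [wp_eq' (bump_integrable 0 1 1)]
    have hrw : ∀ x, f x * (2 * Pr (bump 0 1 1) x - ∫ t in Ioi (0:ℝ), bump 0 1 1 t)
        = f x * (2 * Pr (bump 0 1 1) x - 1) := by intro x; rw [u_total]
    rw [show (fun x => f x * (2 * Pr (bump 0 1 1) x - ∫ t in Ioi (0:ℝ), bump 0 1 1 t))
        = fun x => f x * (2 * Pr (bump 0 1 1) x - 1) from funext hrw] -- may need adjusting
    rw [integral_Ioi_eq_Ioc01 hint2 hsupp2]
    rw [setIntegral_congr_fun measurableSet_Ioc
      (fun x hx => by have hpu := Pr_u_eval hx; simp only [hpu]; ring :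
        EqOn (fun x => f x * (2 * Pr (bump 0 1 1) x - 1))
          (fun x => 2 * (x * f x) - f x) (Ioc 0 1))]
    rw [integral_sub (hf.integrable_id_mul.integrableOn.const_mul 2) hf.integrable.integrableOn,
      integral_const_mul, ← integral_Ioi_eq_Ioc01 hf.integrable hsupp,
      ← integral_Ioi_eq_Ioc01 hf.integrable_id_mul (fun x hx => hsupp (fun h0 => by
        simp [Function.mem_support, h0] at hx)), ← hT]
  linarith [hA, hB]

lemma mca_I_le (hg : IsStrategy g) (hm : mca g ≤ 1/2) :
    ∫ t in Ioi (0:ℝ), t * g t ≤ (∫ t in Ioi (0:ℝ), g t)/2 := by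
  have hTpos := hg.T_pos
  unfold mca at hm
  rw [div_le_iff₀ hTpos] at hm
  linarith

lemma Pr_eq_linear_all (hf : IsStrategy f) (hsupp : Function.support f ⊆ Icc 0 1)
    (hmca : mca f ≤ 1/2)
    (H : ∀ g, IsStrategy g → Function.support g ⊆ Icc 0 1 → mca g ≤ 1/2 →
      0 ≤ ∫ t in Ioi (0:ℝ), g t * ((∫ s in Ioi (0:ℝ), f s) - 2 * Pr f t)) :
    ∀ x ∈ Icc (0:ℝ) 1, Pr f x = x * (∫ s in Ioi (0:ℝ), f s) := by
  set T := ∫ s in Ioi (0:ℝ), f s with hT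
  set G : ℝ → ℝ := fun a => a * T - Pr f a with hG
  have hGc : Continuous G :=
    (continuous_id.mul continuous_const).sub (Pr_continuous hf.integrable hsupp)
  have hG0 : ∀ a ∈ Icc (0:ℝ) 1, 0 ≤ G a := by
    intro a haa
    have := Pr_le_linear hf hsupp H haa
    simp only [hG]
    linarith
  have hIcc : ∫ a in Ioc (0:ℝ) 1, a * T = T/2 := by
    rw [integral_mul_const, ← intervalIntegral.integral_of_le zero_le_one]
    simp
    ring
  have hval : ∫ a in Ioc (0:ℝ) 1, G a ≤ 0 := by
    have h1 : ∫ a in Ioc (0:ℝ) 1, G a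
        = (∫ a in Ioc (0:ℝ) 1, a * T) - ∫ a in Ioc (0:ℝ) 1, Pr f a := by
      simp only [hG]
      exact integral_sub
        ((Continuous.mul continuous_id continuous_const :
          Continuous fun a : ℝ => a * T).integrableOn_Ioc)
        ((Pr_continuous hf.integrable hsupp).integrableOn_Ioc)
    rw [h1, hIcc, Pr_integral_identity hf hsupp, ← hT]
    have := mca_I_le hf hmca
    rw [← hT] at this
    linarith
  have hz : ∫ a in Ioc (0:ℝ) 1, G a = 0 :=
    le_antisymm hval (setIntegral_nonneg measurableSet_Ioc (fun x hx => hG0 x ⟨hx.1.le, hx.2⟩))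
  have hae : G =ᵐ[volume.restrict (Ioc (0:ℝ) 1)] 0 :=
    (integral_eq_zero_iff_of_nonneg_ae
      ((ae_restrict_iff' measurableSet_Ioc).2 (ae_of_all _ fun x hx => hG0 x ⟨hx.1.le, hx.2⟩))
      hGc.integrableOn_Ioc).mp hz
  have hGmeas : MeasurableSet {x | G x ≠ 0} :=
    (measurableSet_singleton (0:ℝ)).compl.preimage hGc.measurable
  have hnull : volume ({x | G x ≠ 0} ∩ Ioc 0 1) = 0 := by
    have h2 : (volume.restrict (Ioc (0:ℝ) 1)) {x | G x ≠ 0} = 0 := by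
      have h3 := hae
      rw [Filter.EventuallyEq, ae_iff] at h3
      simpa using h3
    rwa [Measure.restrict_apply hGmeas] at h2
  have hempty : {x | G x ≠ 0} ∩ Ioo 0 1 = ∅ := by
    by_contra hne
    rw [← Ne, ← nonempty_iff_ne_empty] at hne
    have hop : IsOpen ({x | G x ≠ 0} ∩ Ioo 0 1) :=
      (isOpen_compl_singleton.preimage hGc).inter isOpen_Ioo
    have hpos := hop.measure_pos volume hne
    have hsub : {x | G x ≠ 0} ∩ Ioo 0 1 ⊆ {x | G x ≠ 0} ∩ Ioc 0 1 :=
      fun x hx => ⟨hx.1, hx.2.1, hx.2.2.le⟩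
    exact absurd (measure_mono_null hsub hnull) hpos.ne'
  intro x hx
  have hGx : G x = 0 := by
    rcases eq_or_lt_of_le hx.1 with h0 | h0
    · simp only [hG]; rw [← h0, Pr_nonpos le_rfl]; ring
    rcases eq_or_lt_of_le hx.2 with h1 | h1
    · simp only [hG]; rw [h1, Pr_one hf.integrable hsupp, ← hT]; ring
    · by_contra hne
      have hmem : x ∈ ({x | G x ≠ 0} ∩ Ioo 0 1) := ⟨hne, h0, h1⟩
      rw [hempty] at hmem
      exact hmem
  simp only [hG] at hGx
  linarith
lemma Pr_split (hint : Integrable f) {s u : ℝ} (h0 : 0 ≤ s) (hsu : s ≤ u) :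
    Pr f u = Pr f s + ∫ x in Ioc s u, f x := by
  unfold Pr
  rw [← setIntegral_union (Ioc_disjoint_Ioc_of_le le_rfl) measurableSet_Ioc hint.integrableOn
    hint.integrableOn, Ioc_union_Ioc_eq_Ioc h0 hsu]

lemma ae_const_of_Pr_linear (hf : IsStrategy f) (hsupp : Function.support f ⊆ Icc 0 1)
    (hlin : ∀ x ∈ Icc (0:ℝ) 1, Pr f x = x * (∫ s in Ioi (0:ℝ), f s)) :
    ∀ᵐ x ∂(volume.restrict (Icc (0:ℝ) 1)), f x = (∫ s in Ioi (0:ℝ), f s) := by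
  set T := ∫ s in Ioi (0:ℝ), f s with hT
  have hT0 : 0 < T := hf.T_pos
  have hIcc : volume.restrict (Icc (0:ℝ) 1) = volume.restrict (Ioc (0:ℝ) 1) :=
    (Measure.restrict_congr_set Ioc_ae_eq_Icc).symm
  rw [hIcc]
  set μ := volume.restrict (Ioc (0:ℝ) 1) with hμ
  have hfim : Integrable f μ := hf.integrable.integrableOn
  have hfnn : 0 ≤ᵐ[μ] f := ae_of_all _ hf.2.2.1
  have hTeq : ∫ x, f x ∂μ = T := by
    rw [hμ, hT]
    exact (integral_Ioi_eq_Ioc01 hf.integrable hsupp).symm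
  have key : μ.withDensity (fun x => ENNReal.ofReal (f x))
      = μ.withDensity (fun _ => ENNReal.ofReal T) := by
    have hfin : IsFiniteMeasure (μ.withDensity (fun x => ENNReal.ofReal (f x))) := by
      constructor
      rw [withDensity_apply _ MeasurableSet.univ, setLIntegral_univ]
      exact hfim.lintegral_lt_top
    refine Measure.ext_of_Ioc_finite _ _ ?_ (fun a b hab => ?_)
    · rw [withDensity_apply _ MeasurableSet.univ, withDensity_apply _ MeasurableSet.univ,
        setLIntegral_univ, setLIntegral_univ,
        ← ofReal_integral_eq_lintegral_ofReal hfim hfnn, hTeq, lintegral_const]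
      rw [hμ, Measure.restrict_apply MeasurableSet.univ, univ_inter, Real.volume_Ioc]
      rw [← ENNReal.ofReal_mul hT0.le]
      norm_num
    · rw [withDensity_apply _ measurableSet_Ioc, withDensity_apply _ measurableSet_Ioc, hμ,
        Measure.restrict_restrict measurableSet_Ioc, Ioc_inter_Ioc]
      set s := max a 0 with hs
      set u := min b 1 with hu2
      rcases le_or_gt u s with hus | hsu
      · rw [Ioc_eq_empty (not_lt.2 hus)]
        simp
      · have hs0 : 0 ≤ s := le_max_right a 0
        have hu1 : u ≤ 1 := min_le_right b 1
        rw [← ofReal_integral_eq_lintegral_ofReal hf.integrable.integrableOn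
          (ae_of_all _ hf.2.2.1)]
        have hval : ∫ x in Ioc s u, f x = T * (u - s) := by
          have hsp := Pr_split hf.integrable hs0 hsu.le
          rw [hlin u ⟨le_trans hs0 hsu.le, hu1⟩, hlin s ⟨hs0, le_trans hsu.le hu1⟩] at hsp
          linear_combination -hsp
        rw [hval, lintegral_const, Measure.restrict_apply MeasurableSet.univ, univ_inter,
          Real.volume_Ioc, ← ENNReal.ofReal_mul hT0.le]
  have hae := (withDensity_eq_iff_of_sigmaFinite
    (hf.1.ennreal_ofReal.aemeasurable) measurable_const.aemeasurable).mp key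
  filter_upwards [hae] with x hx
  exact (ENNReal.ofReal_eq_ofReal_iff (hf.2.2.1 x) hT0.le).mp hx
lemma part1_forward (hf : IsStrategy f) (hsupp : Function.support f ⊆ Icc 0 1)
    (hmca : mca f ≤ 1/2)
    (Hwp : ∀ g, IsStrategy g → Function.support g ⊆ Icc 0 1 → mca g ≤ 1/2 → 0 ≤ wp f g) :
    ∃ c : ℝ, 0 < c ∧ ∀ᵐ x ∂(volume.restrict (Icc (0:ℝ) 1)), f x = c := by
  have H : ∀ g, IsStrategy g → Function.support g ⊆ Icc 0 1 → mca g ≤ 1/2 →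
      0 ≤ ∫ t in Ioi (0:ℝ), g t * ((∫ s in Ioi (0:ℝ), f s) - 2 * Pr f t) := by
    intro g hg hgs hgm
    have hw := Hwp g hg hgs hgm
    rwa [wp_swap hf.1 hf.integrable hg.1 hg.integrable] at hw
  exact ⟨_, hf.T_pos, ae_const_of_Pr_linear hf hsupp (Pr_eq_linear_all hf hsupp hmca H)⟩

lemma Pr_le_T (hint : Integrable f) (hnn : ∀ x, 0 ≤ f x)
    (hsupp : Function.support f ⊆ Icc 0 1) (x : ℝ) :
    Pr f x ≤ ∫ t in Ioi (0:ℝ), f t := by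
  rcases le_or_gt x 1 with h | h
  · have := Pr_mono hint hnn h
    rwa [Pr_one hint hsupp] at this
  · rw [Pr_ge_one hint hsupp h.le]

lemma const_T {S : ℝ → ℝ} (hS : IsStrategy S) (hsupp : Function.support S ⊆ Icc 0 1) {C : ℝ}
    (hconst : ∀ᵐ x ∂(volume.restrict (Icc (0:ℝ) 1)), S x = C) :
    (∫ t in Ioi (0:ℝ), S t) = C ∧ ∀ x ∈ Ioc (0:ℝ) 1, Pr S x = C * x := by
  have hconst' : ∀ᵐ x ∂(volume.restrict (Ioc (0:ℝ) 1)), S x = C := by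
    rw [Measure.restrict_congr_set Ioc_ae_eq_Icc]; exact hconst
  constructor
  · rw [integral_Ioi_eq_Ioc01 hS.integrable hsupp,
      integral_congr_ae (hconst'.mono fun x hx => hx : S =ᵐ[volume.restrict (Ioc (0:ℝ) 1)]
        fun _ => C),
      setIntegral_const, Real.volume_real_Ioc_of_le zero_le_one, smul_eq_mul]
    norm_num
  · intro x hx
    have hsub : ∀ᵐ y ∂(volume.restrict (Ioc (0:ℝ) x)), S y = C :=
      ae_restrict_of_ae_restrict_of_subset (Ioc_subset_Ioc_right hx.2) hconst'
    unfold Pr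
    rw [integral_congr_ae (hsub.mono fun y hy => hy : S =ᵐ[volume.restrict (Ioc (0:ℝ) x)]
        fun _ => C),
      setIntegral_const, Real.volume_real_Ioc_of_le hx.1.le, smul_eq_mul, sub_zero, mul_comm]

lemma wp_against_const {h S : ℝ → ℝ} (hh : IsStrategy h)
    (hhsupp : Function.support h ⊆ Icc 0 1)
    (hS : IsStrategy S) (hSsupp : Function.support S ⊆ Icc 0 1) {C : ℝ} (hC : 0 ≤ C)
    (hconst : ∀ᵐ x ∂(volume.restrict (Icc (0:ℝ) 1)), S x = C) :
    wp h S = C * (2 * (∫ t in Ioi (0:ℝ), t * h t) - ∫ t in Ioi (0:ℝ), h t) := by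
  obtain ⟨hTS, hPrS⟩ := const_T hS hSsupp hconst
  obtain ⟨Cb, hCb⟩ := hh.2.1
  have hPrSb : ∀ x, |2 * Pr S x - C| ≤ C := by
    intro x
    have h1 := Pr_nonneg hS.2.2.1 x
    have h2 := Pr_le_T hS.integrable hS.2.2.1 hSsupp x
    rw [hTS] at h2
    rw [abs_le]; constructor <;> linarith
  have hint2 : Integrable (fun x => h x * (2 * Pr S x - C)) := by
    refine integrable_of_bdd_supp (C := Cb * C) (R := 1)
      (hh.1.mul (((continuous_const.mul
        (Pr_continuous hS.integrable hSsupp)).sub continuous_const).measurable))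
      (fun x => ?_) (fun x hx => ?_)
    · rw [abs_mul]
      have : |h x| ≤ Cb := by rw [abs_of_nonneg (hh.2.2.1 x)]; exact hCb x
      exact mul_le_mul this (hPrSb x) (abs_nonneg _)
        (le_trans (abs_nonneg _) this)
    · apply hhsupp
      intro h0
      simp [Function.mem_support, h0] at hx
  have hsupp2 : Function.support (fun x => h x * (2 * Pr S x - C)) ⊆ Icc 0 1 := by
    intro x hx
    apply hhsupp
    intro h0
    simp [Function.mem_support, h0] at hx
  rw [wp_eq' hS.integrable, hTS, integral_Ioi_eq_Ioc01 hint2 hsupp2,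
    setIntegral_congr_fun measurableSet_Ioc
      (fun x hx => by have hp := hPrS x hx; simp only [hp]; ring :
        EqOn (fun x => h x * (2 * Pr S x - C))
          (fun x => C * (2 * (x * h x) - h x)) (Ioc 0 1)),
    integral_const_mul,
    integral_sub (hh.integrable_id_mul.integrableOn.const_mul 2) hh.integrable.integrableOn,
    integral_const_mul, ← integral_Ioi_eq_Ioc01 hh.integrable hhsupp,
    ← integral_Ioi_eq_Ioc01 hh.integrable_id_mul (fun x hx => hhsupp (fun h0 => by
      simp [Function.mem_support, h0] at hx))]

lemma part1_backward (hf : IsStrategy f) (hsuppf : Function.support f ⊆ Icc 0 1)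
    (hg : IsStrategy g) (hsuppg : Function.support g ⊆ Icc 0 1) (hmcag : mca g ≤ 1/2)
    {c : ℝ} (hc : 0 < c)
    (hconst : ∀ᵐ x ∂(volume.restrict (Icc (0:ℝ) 1)), f x = c) : 0 ≤ wp f g := by
  rw [wp_antisymm hf.1 hf.integrable hg.1 hg.integrable,
    wp_against_const hg hsuppg hf hsuppf hc.le hconst]
  nlinarith [mca_I_le hg hmcag]

lemma smul_strategy {c : ℝ} (hc : 0 < c) (hg : IsStrategy g) :
    IsStrategy (fun x => c * g x) := by
  obtain ⟨hm, ⟨Cb, hCb⟩, hnn, ⟨R, hR⟩, hne⟩ := hg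
  refine ⟨measurable_const.mul hm, ⟨c * Cb, fun x =>
    mul_le_mul_of_nonneg_left (hCb x) hc.le⟩, fun x => mul_nonneg hc.le (hnn x),
    ⟨R, fun x hx => hR (fun h0 => hx (by simp [Function.mem_support, h0]))⟩, fun hae => ?_⟩
  apply hne
  filter_upwards [hae] with x hx
  simpa [hc.ne'] using hx

lemma smul_supp {c : ℝ} (hc : c ≠ 0) (g : ℝ → ℝ) :
    Function.support (fun x => c * g x) = Function.support g := by
  ext x
  simp [Function.mem_support, hc]

lemma smul_mca {c : ℝ} (hc : 0 < c) (g : ℝ → ℝ) : mca (fun x => c * g x) = mca g := by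
  unfold mca
  have h1 : ∫ t in Ioi (0:ℝ), t * (c * g t) = c * ∫ t in Ioi (0:ℝ), t * g t := by
    rw [← integral_const_mul]
    congr 1
    funext t
    ring
  rw [h1, integral_const_mul, mul_div_mul_left _ _ hc.ne']

lemma wp_smul (c : ℝ) (g h : ℝ → ℝ) : wp (fun x => c * g x) h = c * wp g h := by
  unfold wp
  rw [← integral_const_mul]
  congr 1
  funext x
  ring
lemma sum_strategy {n : ℕ} (f : Fin n → ℝ → ℝ)
    (hf : ∀ k, IsStrategy (f k) ∧ Function.support (f k) ⊆ Icc (0:ℝ) 1 ∧ mca (f k) ≤ 1/2)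
    {k : Fin n} (hne : (Finset.univ.erase k).Nonempty) :
    IsStrategy (fun x => ∑ ℓ ∈ Finset.univ.erase k, f ℓ x)
      ∧ Function.support (fun x => ∑ ℓ ∈ Finset.univ.erase k, f ℓ x) ⊆ Icc (0:ℝ) 1
      ∧ mca (fun x => ∑ ℓ ∈ Finset.univ.erase k, f ℓ x) ≤ 1/2 := by
  obtain ⟨ℓ₀, hℓ₀⟩ := hne
  have hsupp : Function.support (fun x => ∑ ℓ ∈ Finset.univ.erase k, f ℓ x) ⊆ Icc (0:ℝ) 1 := by
    intro x hx
    have hex : ∃ ℓ ∈ Finset.univ.erase k, f ℓ x ≠ 0 := by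
      by_contra hcon
      push_neg at hcon
      exact hx (Finset.sum_eq_zero hcon)
    obtain ⟨ℓ, -, hℓ⟩ := hex
    exact (hf ℓ).2.1 hℓ
  have hTsum : ∫ t in Ioi (0:ℝ), (∑ ℓ ∈ Finset.univ.erase k, f ℓ t)
      = ∑ ℓ ∈ Finset.univ.erase k, ∫ t in Ioi (0:ℝ), f ℓ t :=
    integral_finset_sum _ (fun ℓ _ => (hf ℓ).1.integrable.integrableOn)
  have hIsum : ∫ t in Ioi (0:ℝ), t * (∑ ℓ ∈ Finset.univ.erase k, f ℓ t)
      = ∑ ℓ ∈ Finset.univ.erase k, ∫ t in Ioi (0:ℝ), t * f ℓ t := by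
    rw [show (fun t => t * ∑ ℓ ∈ Finset.univ.erase k, f ℓ t)
        = fun t => ∑ ℓ ∈ Finset.univ.erase k, t * f ℓ t from
      funext fun t => Finset.mul_sum _ _ _]
    exact integral_finset_sum _ (fun ℓ _ => (hf ℓ).1.integrable_id_mul.integrableOn)
  have hTpos : 0 < ∑ ℓ ∈ Finset.univ.erase k, ∫ t in Ioi (0:ℝ), f ℓ t := by
    refine lt_of_lt_of_le (hf ℓ₀).1.T_pos (Finset.single_le_sum (f := fun ℓ => ∫ t in Ioi (0:ℝ), f ℓ t) (fun ℓ _ => ?_) hℓ₀)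
    exact setIntegral_nonneg measurableSet_Ioi (fun t _ => (hf ℓ).1.2.2.1 t)
  have hstrat : IsStrategy (fun x => ∑ ℓ ∈ Finset.univ.erase k, f ℓ x) := by
    refine ⟨Finset.measurable_sum _ (fun ℓ _ => (hf ℓ).1.1), ?_, fun x =>
      Finset.sum_nonneg (fun ℓ _ => (hf ℓ).1.2.2.1 x), ⟨1, hsupp⟩, ?_⟩
    · choose Cb hCb using fun ℓ => (hf ℓ).1.2.1
      exact ⟨∑ ℓ ∈ Finset.univ.erase k, Cb ℓ, fun x =>
        Finset.sum_le_sum (fun ℓ _ => hCb ℓ x)⟩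
    · intro hae
      apply (hf ℓ₀).1.2.2.2.2
      filter_upwards [hae] with x hx
      have h1 : ∑ ℓ ∈ Finset.univ.erase k, f ℓ x = 0 := by simpa using hx
      have h2 : f ℓ₀ x ≤ ∑ ℓ ∈ Finset.univ.erase k, f ℓ x :=
        Finset.single_le_sum (fun ℓ _ => (hf ℓ).1.2.2.1 x) hℓ₀
      have h3 := (hf ℓ₀).1.2.2.1 x
      simp only [Pi.zero_apply]
      linarith
  refine ⟨hstrat, hsupp, ?_⟩
  unfold mca
  rw [hTsum, hIsum, div_le_iff₀ hTpos]
  calc ∑ ℓ ∈ Finset.univ.erase k, ∫ t in Ioi (0:ℝ), t * f ℓ t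
      ≤ ∑ ℓ ∈ Finset.univ.erase k, (∫ t in Ioi (0:ℝ), f ℓ t)/2 :=
        Finset.sum_le_sum (fun ℓ _ => mca_I_le (hf ℓ).1 (hf ℓ).2.2)
    _ = 1/2 * ∑ ℓ ∈ Finset.univ.erase k, ∫ t in Ioi (0:ℝ), f ℓ t := by
        rw [Finset.mul_sum]
        exact Finset.sum_congr rfl (fun ℓ _ => by ring)

lemma const_I {S : ℝ → ℝ} (hS : IsStrategy S) (hsupp : Function.support S ⊆ Icc 0 1) {C : ℝ}
    (hconst : ∀ᵐ x ∂(volume.restrict (Icc (0:ℝ) 1)), S x = C) :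
    ∫ t in Ioi (0:ℝ), t * S t = C/2 := by
  have hconst' : ∀ᵐ x ∂(volume.restrict (Ioc (0:ℝ) 1)), S x = C := by
    rw [Measure.restrict_congr_set Ioc_ae_eq_Icc]; exact hconst
  rw [integral_Ioi_eq_Ioc01 hS.integrable_id_mul (fun x hx => hsupp (fun h0 => by
    simp [Function.mem_support, h0] at hx))]
  rw [integral_congr_ae (hconst'.mono fun x hx => by show x * S x = x * C; rw [hx] :
    (fun t => t * S t) =ᵐ[volume.restrict (Ioc (0:ℝ) 1)] fun t => t * C)]
  rw [integral_mul_const, ← intervalIntegral.integral_of_le zero_le_one]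
  simp
  ring

lemma ae_zero_glue {h : ℝ → ℝ} (hsupp : Function.support h ⊆ Icc (0:ℝ) 1)
    (hae : ∀ᵐ x ∂(volume.restrict (Icc (0:ℝ) 1)), h x = 0) : h =ᵐ[volume] (0 : ℝ → ℝ) := by
  rw [ae_restrict_iff' measurableSet_Icc] at hae
  filter_upwards [hae] with x hx
  by_cases hmem : x ∈ Icc (0:ℝ) 1
  · exact hx hmem
  · by_contra hne
    exact hmem (hsupp hne)
theorem stmt11 :
    (∀ f : ℝ → ℝ, IsStrategy f → Function.support f ⊆ Icc (0:ℝ) 1 → mca f ≤ 1/2 →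
      ((∀ g : ℝ → ℝ, IsStrategy g → Function.support g ⊆ Icc (0:ℝ) 1 → mca g ≤ 1/2 →
          0 ≤ wp f g) ↔
        ∃ c : ℝ, 0 < c ∧ ∀ᵐ x ∂(volume.restrict (Icc (0:ℝ) 1)), f x = c)) ∧
    (∀ n : ℕ, 2 ≤ n → ∀ f : Fin n → ℝ → ℝ,
      (∀ k, IsStrategy (f k) ∧ Function.support (f k) ⊆ Icc (0:ℝ) 1 ∧ mca (f k) ≤ 1/2) →
      ((∀ k, ∀ g : ℝ → ℝ, IsStrategy g → Function.support g ⊆ Icc (0:ℝ) 1 → mca g ≤ 1/2 →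
          wp g (fun x => ∑ ℓ ∈ Finset.univ.erase k, f ℓ x) ≤
            wp (f k) (fun x => ∑ ℓ ∈ Finset.univ.erase k, f ℓ x)) ↔
        (∀ k, ∃ c : ℝ, 0 < c ∧ ∀ᵐ x ∂(volume.restrict (Icc (0:ℝ) 1)), f k x = c))) := by
  constructor
  · intro f hf hsupp hmca
    constructor
    · intro Hwp
      exact part1_forward hf hsupp hmca Hwp
    · rintro ⟨c, hc, hconst⟩ g hg hgs hgm
      exact part1_backward hf hsupp hg hgs hgm hc hconst
  · intro n hn f hf
    have hne : ∀ k : Fin n, (Finset.univ.erase k).Nonempty := by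
      intro k
      rw [← Finset.card_pos, Finset.card_erase_of_mem (Finset.mem_univ k),
        Finset.card_univ, Fintype.card_fin]
      omega
    have hn1 : ((n:ℝ) - 1) ≠ 0 := by
      have : (2:ℝ) ≤ (n:ℝ) := by exact_mod_cast hn
      linarith
    constructor
    · intro Hbr
      have hconstS : ∀ k : Fin n, ∃ Ck : ℝ, 0 < Ck ∧
          ∀ᵐ x ∂(volume.restrict (Icc (0:ℝ) 1)),
            (∑ ℓ ∈ Finset.univ.erase k, f ℓ x) = Ck := by
        intro k
        obtain ⟨hSstrat, hSsupp, hSmca⟩ := sum_strategy f hf (hne k)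
        have h2 := Hbr k (fun x => 2 * f k x) (smul_strategy two_pos (hf k).1)
          (by rw [smul_supp (two_ne_zero)]; exact (hf k).2.1)
          (by rw [smul_mca two_pos]; exact (hf k).2.2)
        rw [wp_smul] at h2
        have hhalf := Hbr k (fun x => (1/2 : ℝ) * f k x)
          (smul_strategy (by norm_num) (hf k).1)
          (by rw [smul_supp (by norm_num : (1/2 : ℝ) ≠ 0)]; exact (hf k).2.1)
          (by rw [smul_mca (by norm_num : (0:ℝ) < 1/2)]; exact (hf k).2.2)
        rw [wp_smul] at hhalf
        have hzero : wp (f k) (fun x => ∑ ℓ ∈ Finset.univ.erase k, f ℓ x) = 0 := by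
          linarith
        have Hwp : ∀ g, IsStrategy g → Function.support g ⊆ Icc (0:ℝ) 1 → mca g ≤ 1/2 →
            0 ≤ wp (fun x => ∑ ℓ ∈ Finset.univ.erase k, f ℓ x) g := by
          intro g hg hgs hgm
          have h3 := Hbr k g hg hgs hgm
          rw [hzero, wp_antisymm hg.1 hg.integrable hSstrat.1 hSstrat.integrable] at h3
          linarith
        exact part1_forward hSstrat hSsupp hSmca Hwp
      choose C hCpos hCae using hconstS
      intro k
      have hall : ∀ᵐ x ∂(volume.restrict (Icc (0:ℝ) 1)),
          ∀ j : Fin n, (∑ ℓ ∈ Finset.univ.erase j, f ℓ x) = C j :=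
        Filter.eventually_all.2 hCae
      have hae : ∀ᵐ x ∂(volume.restrict (Icc (0:ℝ) 1)),
          f k x = (∑ j, C j)/((n:ℝ) - 1) - C k := by
        filter_upwards [hall] with x hx
        have hsum : ∀ j : Fin n, (∑ ℓ, f ℓ x) - f j x = C j := by
          intro j
          rw [← Finset.sum_erase_eq_sub (Finset.mem_univ j)]
          exact hx j
        have h1 : ∑ j : Fin n, ((∑ ℓ, f ℓ x) - f j x) = ∑ j, C j :=
          Finset.sum_congr rfl (fun j _ => hsum j)
        have h2 : ∑ j : Fin n, ((∑ ℓ, f ℓ x) - f j x)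
            = (n:ℝ) * (∑ ℓ, f ℓ x) - ∑ j, f j x := by
          rw [Finset.sum_sub_distrib, Finset.sum_const, Finset.card_univ, Fintype.card_fin,
            nsmul_eq_mul]
        have h3 : ((n:ℝ) - 1) * (∑ ℓ, f ℓ x) = ∑ j, C j := by
          rw [← h1, h2]; ring
        have h4 : (∑ ℓ, f ℓ x) = (∑ j, C j)/((n:ℝ) - 1) := by
          field_simp
          linarith [h3]
        have h5 := hsum k
        rw [h4] at h5
        linarith
      have hμne : (volume.restrict (Icc (0:ℝ) 1)) ≠ 0 := by
        intro h0
        have h1 : (volume.restrict (Icc (0:ℝ) 1)) univ = volume (Icc (0:ℝ) 1) := by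
          rw [Measure.restrict_apply_univ]
        rw [h0] at h1
        simp [Real.volume_Icc] at h1
      haveI : (ae (volume.restrict (Icc (0:ℝ) 1))).NeBot := ae_neBot.2 hμne
      have hge : 0 ≤ (∑ j, C j)/((n:ℝ) - 1) - C k := by
        obtain ⟨x, hx⟩ := hae.exists
        rw [← hx]
        exact (hf k).1.2.2.1 x
      have hne0 : (∑ j, C j)/((n:ℝ) - 1) - C k ≠ 0 := by
        intro h0
        apply (hf k).1.2.2.2.2
        apply ae_zero_glue (hf k).2.1
        filter_upwards [hae] with x hx
        rw [hx, h0]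
      exact ⟨_, lt_of_le_of_ne hge (Ne.symm hne0), hae⟩
    · intro hconsts k g hg hgs hgm
      obtain ⟨hSstrat, hSsupp, hSmca⟩ := sum_strategy f hf (hne k)
      choose c hcpos hcae using hconsts
      have hCk : ∀ᵐ x ∂(volume.restrict (Icc (0:ℝ) 1)),
          (∑ ℓ ∈ Finset.univ.erase k, f ℓ x) = ∑ ℓ ∈ Finset.univ.erase k, c ℓ := by
        filter_upwards [Filter.eventually_all.2 hcae] with x hx
        exact Finset.sum_congr rfl (fun ℓ _ => hx ℓ)
      have hCkpos : 0 < ∑ ℓ ∈ Finset.univ.erase k, c ℓ :=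
        Finset.sum_pos (fun ℓ _ => hcpos ℓ) (hne k)
      rw [wp_against_const hg hgs hSstrat hSsupp hCkpos.le hCk,
        wp_against_const (hf k).1 (hf k).2.1 hSstrat hSsupp hCkpos.le hCk]
      have hI := const_I (hf k).1 (hf k).2.1 (hcae k)
      have hT := (const_T (hf k).1 (hf k).2.1 (hcae k)).1
      rw [hI, hT]
      have hg2 := mca_I_le hg hgm
      nlinarith [hCkpos]
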